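/- Let K be a field with at least 3 elements, let V be a finite-dimensional K-vector space, and let G' ≤ H ≤ G be subgroups of GL(V). Assume that V is a semisimple representation of G and a semisimple representation of G', and that the centralizer of G in GL(V) equals the centralizer of G' in GL(V). Then V is a semisimple representation of H, and the centralizer of H in GL(V) equals the centralizer of G in GL(V). -/

import Mathlib

open LinearMap Filter

section auxlemmas

variable {K V : Type*} [Field K] [AddCommGroup V] [Module K V]

open LinearMap Filter



lemma aux_sum_units [FiniteDimensional K V] (hK : 3 ≤ Cardinal.mk K) (c : Module.End K V) :
    ∃ u v : Module.End K V, Function.Bijective u ∧ Function.Bijective v ∧ u + v = c ∧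
      ∀ g : Module.End K V, Commute g c → Commute g u ∧ Commute g v := by
  obtain ⟨a, ha1, ha0⟩ := Cardinal.three_le hK 1 0
  obtain ⟨n, hcompl, hn1⟩ :=
    ((c.eventually_isCompl_ker_pow_range_pow).and (eventually_ge_atTop 1)).exists
  set N := LinearMap.ker (c ^ n) with hN
  set I := LinearMap.range (c ^ n) with hI
  set π : Module.End K V := N.subtype ∘ₗ N.linearProjOfIsCompl I hcompl with hπ
  have hsmul0 : ∀ y : V, a • y = 0 → y = 0 := by
    intro y h; rcases smul_eq_zero.mp h with h' | h'
    · exact absurd h' ha0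
    · exact h'
  have hπN : ∀ x ∈ N, π x = x := fun x hx =>
    congrArg Subtype.val (Submodule.linearProjOfIsCompl_apply_left hcompl ⟨x, hx⟩)
  have hπI : ∀ x ∈ I, π x = 0 := fun x hx =>
    congrArg Subtype.val (Submodule.linearProjOfIsCompl_apply_right hcompl ⟨x, hx⟩)
  have hπmem : ∀ x, π x ∈ N := fun x => (N.linearProjOfIsCompl I hcompl x).2
  have hsub : ∀ x, x - π x ∈ I := by
    intro x
    obtain ⟨y, z, hyN, hzI, hyz⟩ := Submodule.codisjoint_iff_exists_add_eq.mp hcompl.codisjoint x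
    have : π x = y := by
      rw [← hyz, map_add, hπN y hyN, hπI z hzI, add_zero]
    rw [this, ← hyz]; simpa using hzI
  have hcN : ∀ x ∈ N, c x ∈ N := by
    intro x hx
    have : (c ^ n) (c x) = c ((c ^ n) x) := by
      rw [← Module.End.mul_apply, ← Module.End.mul_apply, ← pow_succ, ← pow_succ']
    simp only [hN, LinearMap.mem_ker] at hx ⊢
    rw [this, hx, map_zero]
  have hcI : ∀ x ∈ I, c x ∈ I := by
    rintro x ⟨y, rfl⟩
    exact ⟨c y, by rw [← Module.End.mul_apply, ← Module.End.mul_apply, ← pow_succ, ← pow_succ']⟩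
  have hkerc : ∀ x ∈ I, c x = 0 → x = 0 := by
    intro x hxI hcx
    have hxN : x ∈ N := by
      obtain ⟨m, rfl⟩ := Nat.exists_eq_add_of_le hn1
      simp only [hN, LinearMap.mem_ker]
      rw [add_comm 1 m, pow_succ, Module.End.mul_apply, hcx, map_zero]
    exact (Submodule.disjoint_def.mp hcompl.disjoint) x hxN hxI
  set u : Module.End K V := a • π + a • (c * (1 - π)) with hu
  set v : Module.End K V := c - u with hv
  have happ : ∀ x, u x = a • π x + a • c (x - π x) := by
    intro x; simp [hu, Module.End.mul_apply, LinearMap.sub_apply, smul_sub]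
  have hu_inj : Function.Injective u := by
    rw [← LinearMap.ker_eq_bot, Submodule.eq_bot_iff]
    intro x hx
    rw [LinearMap.mem_ker, happ x] at hx
    have h1 : a • π x ∈ N := Submodule.smul_mem _ _ (hπmem x)
    have h2 : a • c (x - π x) ∈ I := Submodule.smul_mem _ _ (hcI _ (hsub x))
    have e1 : a • π x = 0 := (Submodule.disjoint_def.mp hcompl.disjoint) _ h1
      (by rw [eq_neg_of_add_eq_zero_left hx]; exact Submodule.neg_mem _ h2)
    have e2 : a • c (x - π x) = 0 := (Submodule.disjoint_def.mp hcompl.disjoint) _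
      (by rw [eq_neg_of_add_eq_zero_right hx]; exact Submodule.neg_mem _ h1) h2
    have hπx : π x = 0 := hsmul0 _ e1
    have hxI : x - π x = 0 := hkerc _ (hsub x) (hsmul0 _ e2)
    have := sub_eq_zero.mp hxI
    rw [this]; exact hπx
  have hv_inj : Function.Injective v := by
    rw [← LinearMap.ker_eq_bot, Submodule.eq_bot_iff]
    intro x hx
    rw [LinearMap.mem_ker] at hx
    have hcx : c x = c (π x) + c (x - π x) := by
      rw [← map_add]; congr 1; abel
    have hvx : (c (π x) - a • π x) + (1 - a) • c (x - π x) = 0 := by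
      rw [← hx]
      simp only [hv, LinearMap.sub_apply, happ x, hcx, sub_smul, one_smul, smul_sub]
      abel
    have h1 : c (π x) - a • π x ∈ N :=
      Submodule.sub_mem _ (hcN _ (hπmem x)) (Submodule.smul_mem _ _ (hπmem x))
    have h2 : (1 - a) • c (x - π x) ∈ I := Submodule.smul_mem _ _ (hcI _ (hsub x))
    have e1 : c (π x) - a • π x = 0 := (Submodule.disjoint_def.mp hcompl.disjoint) _ h1
      (by rw [eq_neg_of_add_eq_zero_left hvx]; exact Submodule.neg_mem _ h2)
    have e2 : (1 - a) • c (x - π x) = 0 := (Submodule.disjoint_def.mp hcompl.disjoint) _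
      (by rw [eq_neg_of_add_eq_zero_right hvx]; exact Submodule.neg_mem _ h1) h2
    have hcπ : c (π x) = a • π x := sub_eq_zero.mp e1
    have hpow : ∀ m : ℕ, (c ^ m) (π x) = a ^ m • π x := by
      intro m
      induction m with
      | zero => simp
      | succ k ih =>
        rw [pow_succ, Module.End.mul_apply, hcπ, map_smul, ih, smul_smul, ← pow_succ']
    have hπx : π x = 0 := by
      have hmem := hπmem x
      rw [hN, LinearMap.mem_ker] at hmem
      have h0 : a ^ n • π x = 0 := by rw [← hpow n]; exact hmem
      rcases smul_eq_zero.mp h0 with h' | h'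
      · exact absurd h' (pow_ne_zero n ha0)
      · exact h'
    have hxI : x - π x = 0 := by
      have h1a : (1 - a) ≠ 0 := sub_ne_zero.mpr (Ne.symm ha1)
      have : c (x - π x) = 0 := by
        rcases smul_eq_zero.mp e2 with h' | h'
        · exact absurd h' h1a
        · exact h'
      exact hkerc _ (hsub x) this
    have := sub_eq_zero.mp hxI
    rw [this]; exact hπx
  refine ⟨u, v, ⟨hu_inj, LinearMap.injective_iff_surjective.mp hu_inj⟩,
    ⟨hv_inj, LinearMap.injective_iff_surjective.mp hv_inj⟩, by rw [hv]; abel, ?_⟩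
  intro g hgc
  have hgn : Commute g (c ^ n) := hgc.pow_right n
  have hgN : ∀ x ∈ N, g x ∈ N := by
    intro x hx
    simp only [hN, LinearMap.mem_ker] at hx ⊢
    rw [← Module.End.mul_apply, ← hgn.eq, Module.End.mul_apply, hx, map_zero]
  have hgI : ∀ x ∈ I, g x ∈ I := by
    rintro x ⟨y, rfl⟩
    exact ⟨g y, by rw [← Module.End.mul_apply, ← Module.End.mul_apply, hgn.eq]⟩
  have hgπ : Commute g π := by
    refine LinearMap.ext fun x => ?_
    have h1 : g (π x) ∈ N := hgN _ (hπmem x)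
    have h2 : g (x - π x) ∈ I := hgI _ (hsub x)
    have hgx : g x = g (π x) + g (x - π x) := by rw [← map_add]; congr 1; abel
    show g (π x) = π (g x)
    rw [hgx, map_add, hπN _ h1, hπI _ h2, add_zero]
  have hgu : Commute g u :=
    (hgπ.smul_right a).add_right ((hgc.mul_right ((Commute.one_right g).sub_right hgπ)).smul_right a)
  exact ⟨hgu, hgc.sub_right hgu⟩

open LinearMap



lemma aux_density [FiniteDimensional K V] (A : Subalgebra K (Module.End K V))
    (hss : ∀ W : Submodule K V, (∀ a ∈ A, ∀ v ∈ W, a v ∈ W) →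
      ∃ W' : Submodule K V, IsCompl W W' ∧ ∀ a ∈ A, ∀ v ∈ W', a v ∈ W')
    (f : Module.End K V)
    (hf : ∀ c : Module.End K V, (∀ a ∈ A, Commute a c) → Commute f c) :
    f ∈ A := by
  letI instA : Module A V := A.moduleLeft
  have hsmul_def : ∀ (a : A) (v : V), a • v = (a : Module.End K V) v := fun a v => rfl
  haveI : IsScalarTower K A V := ⟨fun k a v => by
    rw [hsmul_def, hsmul_def]
    have : ((k • a : A) : Module.End K V) = k • (a : Module.End K V) := rfl
    rw [this, LinearMap.smul_apply]⟩
  haveI hssA : IsSemisimpleModule A V := by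
    refine (isSemisimpleModule_iff _ _).mpr ⟨?_⟩
    intro p
    have hWinv : ∀ a ∈ A, ∀ v ∈ p.restrictScalars K, a v ∈ p.restrictScalars K := by
      intro a ha v hv
      exact p.smul_mem ⟨a, ha⟩ hv
    obtain ⟨W', hWc, hW'inv⟩ := hss (p.restrictScalars K) hWinv
    refine ⟨{ carrier := (W' : Set V)
              add_mem' := fun hv hw => W'.add_mem hv hw
              zero_mem' := W'.zero_mem
              smul_mem' := fun a {v} hv => hW'inv a.1 a.2 v hv }, ?_⟩
    rw [isCompl_iff]
    constructor
    · rw [Submodule.disjoint_def]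
      intro x hx1 hx2
      exact (Submodule.disjoint_def.mp hWc.disjoint) x hx1 hx2
    · rw [codisjoint_iff_le_sup]
      intro x _
      obtain ⟨y, z, hy, hz, hyz⟩ :=
        Submodule.codisjoint_iff_exists_add_eq.mp hWc.codisjoint x
      exact hyz ▸ Submodule.add_mem_sup hy hz
  -- set up the diagonal action on `ι → V`
  set ι := Fin (Module.finrank K V) with hι
  set b : Module.Basis ι K V := Module.finBasis K V with hb
  set x : ι → V := fun i => b i with hxdef
  haveI : IsSemisimpleModule A (ι → V) := by
    apply isSemisimpleModule_of_isSemisimpleModule_submodule'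
      (p := fun i : ι => LinearMap.range (LinearMap.single A (fun _ : ι => V) i))
    · intro i; exact IsSemisimpleModule.range _
    · rw [eq_top_iff]
      intro w _
      have hw : w = ∑ i, Pi.single i (w i) := (Finset.univ_sum_single w).symm
      rw [hw]
      exact Submodule.sum_mem _ fun i _ =>
        Submodule.mem_iSup_of_mem i ⟨w i, rfl⟩
  set p : Submodule A (ι → V) := Submodule.span A {x} with hp
  obtain ⟨q, hq⟩ := exists_isCompl p
  set π : (ι → V) →ₗ[A] (ι → V) := p.subtype ∘ₗ p.linearProjOfIsCompl q hq with hπ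
  have hπmem : ∀ w, π w ∈ p := fun w => (p.linearProjOfIsCompl q hq w).2
  have hπp : ∀ w ∈ p, π w = w := fun w hw =>
    congrArg Subtype.val (Submodule.linearProjOfIsCompl_apply_left hq ⟨w, hw⟩)
  -- the matrix entries of π are A-linear endomorphisms of V, hence commute with f
  set e : ι → ι → Module.End K V := fun i j =>
    (LinearMap.proj i) ∘ₗ (π.restrictScalars K) ∘ₗ (LinearMap.single K (fun _ : ι => V) j)
    with he
  have hcomm : ∀ i j, Commute f (e i j) := by
    intro i j
    apply hf
    intro a ha
    refine LinearMap.ext fun v => ?_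
    show a ((e i j) v) = (e i j) (a v)
    have h1 : (LinearMap.single K (fun _ : ι => V) j) (a v)
        = (⟨a, ha⟩ : A) • (LinearMap.single K (fun _ : ι => V) j) v := by
      refine funext fun i' => ?_
      by_cases hij : i' = j
      · subst hij; simp [LinearMap.single_apply, Pi.single_eq_same, hsmul_def]
      · simp [LinearMap.single_apply, Pi.single_eq_of_ne hij, hsmul_def]
    simp only [he, LinearMap.coe_comp, Function.comp_apply, LinearMap.coe_restrictScalars]
    rw [h1, map_smul]
    rfl
  -- the diagonal action of f
  set F : (ι → V) →ₗ[K] (ι → V) := LinearMap.pi (fun i => f ∘ₗ LinearMap.proj i) with hF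
  have hπF : ∀ w, π (F w) = F (π w) := by
    intro w
    have hdecomp : ∀ (w' : ι → V) (i : ι),
        π w' i = ∑ j, (e i j) (w' j) := by
      intro w' i
      have hw' : w' = ∑ j, (LinearMap.single K (fun _ : ι => V) j) (w' j) := by
        refine (Finset.univ_sum_single w').symm.trans ?_
        exact Finset.sum_congr rfl fun j _ => by simp [LinearMap.single_apply]
      conv_lhs => rw [hw']
      rw [← LinearMap.coe_restrictScalars K π, map_sum]
      simp only [he, LinearMap.coe_comp, Function.comp_apply]
      rw [Finset.sum_apply]
      rfl
    refine funext fun i => ?_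
    have h1 : π (F w) i = ∑ j, (e i j) (f (w j)) := by
      rw [hdecomp (F w) i]; rfl
    have h2 : F (π w) i = f (π w i) := rfl
    rw [h1, h2, hdecomp w i, map_sum]
    refine Finset.sum_congr rfl fun j _ => ?_
    have := (hcomm i j).eq
    calc (e i j) (f (w j)) = ((e i j) * f) (w j) := rfl
      _ = (f * (e i j)) (w j) := by rw [this]
      _ = f ((e i j) (w j)) := rfl
  -- conclude
  have hxp : x ∈ p := Submodule.mem_span_singleton_self x
  have hFx : F x ∈ p := by
    have : π (F x) = F x := by rw [hπF x, hπp x hxp]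
    rw [← this]; exact hπmem _
  rw [hp, Submodule.mem_span_singleton] at hFx
  obtain ⟨a, ha⟩ := hFx
  have : f = (a : Module.End K V) := by
    refine b.ext fun i => ?_
    have h1 : F x i = f (b i) := rfl
    have h2 : (a • x) i = (a : Module.End K V) (b i) := rfl
    rw [← h1, ← h2, ha]
  rw [this]
  exact a.2

end auxlemmas




/-- Let `K` be a field with at least 3 elements, `V` a
finite-dimensional `K`-vector space, and `G' ≤ H ≤ G` subgroups of `GL(V)`
(realized as the group of linear automorphisms `V ≃ₗ[K] V`).  If `V` is a
semisimple representation of `G` and of `G'` (every invariant subspace has an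
invariant complement), and the centralizers of `G` and `G'` in `GL(V)` agree,
then `V` is a semisimple representation of `H` and the centralizer of `H`
equals that of `G`. -/
theorem stmt_0 {K V : Type*} [Field K] [AddCommGroup V] [Module K V]
    [FiniteDimensional K V] (hK : 3 ≤ Cardinal.mk K)
    (G' H G : Subgroup (V ≃ₗ[K] V)) (hG'H : G' ≤ H) (hHG : H ≤ G)
    (hGss : ∀ W : Submodule K V, (∀ g ∈ G, ∀ v ∈ W, g v ∈ W) →
      ∃ W' : Submodule K V, IsCompl W W' ∧ ∀ g ∈ G, ∀ v ∈ W', g v ∈ W')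
    (hG'ss : ∀ W : Submodule K V, (∀ g ∈ G', ∀ v ∈ W, g v ∈ W) →
      ∃ W' : Submodule K V, IsCompl W W' ∧ ∀ g ∈ G', ∀ v ∈ W', g v ∈ W')
    (hcent : Subgroup.centralizer (G : Set (V ≃ₗ[K] V)) =
      Subgroup.centralizer (G' : Set (V ≃ₗ[K] V))) :
    (∀ W : Submodule K V, (∀ g ∈ H, ∀ v ∈ W, g v ∈ W) →
      ∃ W' : Submodule K V, IsCompl W W' ∧ ∀ g ∈ H, ∀ v ∈ W', g v ∈ W') ∧
    Subgroup.centralizer (H : Set (V ≃ₗ[K] V)) =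
      Subgroup.centralizer (G : Set (V ≃ₗ[K] V)) := by
  -- the coercion map to endomorphisms
  set j : (V ≃ₗ[K] V) → Module.End K V := fun g => (g : V →ₗ[K] V) with hj
  set s' : Set (Module.End K V) := j '' (G' : Set (V ≃ₗ[K] V)) with hs'
  set A' : Subalgebra K (Module.End K V) := Algebra.adjoin K s' with hA'
  -- invariance transfer: a `G'`-invariant subspace is `A'`-invariant
  have hinv : ∀ W : Submodule K V, (∀ g ∈ G', ∀ v ∈ W, g v ∈ W) →
      ∀ a ∈ A', ∀ v ∈ W, a v ∈ W := by
    intro W hW a ha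
    induction ha using Algebra.adjoin_induction with
    | mem g hg =>
      obtain ⟨g0, hg0, rfl⟩ := hg
      exact fun v hv => hW g0 hg0 v hv
    | algebraMap r =>
      intro v hv
      rw [Module.algebraMap_end_apply]
      exact W.smul_mem r hv
    | add x y hx hy ihx ihy =>
      intro v hv
      rw [LinearMap.add_apply]
      exact W.add_mem (ihx v hv) (ihy v hv)
    | mul x y hx hy ihx ihy =>
      intro v hv
      rw [Module.End.mul_apply]
      exact ihx _ (ihy v hv)
  -- semisimplicity hypothesis for `A'` in the form needed for `aux_density`
  have hssA' : ∀ W : Submodule K V, (∀ a ∈ A', ∀ v ∈ W, a v ∈ W) →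
      ∃ W' : Submodule K V, IsCompl W W' ∧ ∀ a ∈ A', ∀ v ∈ W', a v ∈ W' := by
    intro W hW
    have hWG' : ∀ g ∈ G', ∀ v ∈ W, g v ∈ W := fun g hg v hv =>
      hW (j g) (Algebra.subset_adjoin ⟨g, hg, rfl⟩) v hv
    obtain ⟨W', hWc, hW'⟩ := hG'ss W hWG'
    exact ⟨W', hWc, hinv W' hW'⟩
  -- every element of `G` lies in `A'`
  have hGA' : ∀ g ∈ G, j g ∈ A' := by
    intro g hg
    apply aux_density A' hssA'
    intro c hc
    obtain ⟨u, v, hu, hv, huv, hcomm⟩ := aux_sum_units hK c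
    set ue : V ≃ₗ[K] V := LinearEquiv.ofBijective u hu with hue
    set ve : V ≃ₗ[K] V := LinearEquiv.ofBijective v hv with hve
    have hjue : j ue = u := rfl
    have hjve : j ve = v := rfl
    -- each element of `G'` commutes with `c`
    have hG'c : ∀ g' ∈ G', Commute (j g') c := fun g' hg' =>
      hc (j g') (Algebra.subset_adjoin ⟨g', hg', rfl⟩)
    -- hence `ue, ve` centralize `G'`, hence `G`, hence commute with `g`
    have hmem : ∀ w : V ≃ₗ[K] V, j w = u ∨ j w = v →
        w ∈ Subgroup.centralizer (G' : Set (V ≃ₗ[K] V)) := by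
      intro w hw
      rw [Subgroup.mem_centralizer_iff]
      intro h hh
      apply LinearEquiv.toLinearMap_injective
      have : Commute (j h) (j w) := by
        rcases hw with hw | hw
        · rw [hw]; exact (hcomm (j h) (hG'c h hh)).1
        · rw [hw]; exact (hcomm (j h) (hG'c h hh)).2
      exact this.eq
    have huec : ue ∈ Subgroup.centralizer (G : Set (V ≃ₗ[K] V)) := by
      rw [hcent]; exact hmem ue (Or.inl hjue)
    have hvec : ve ∈ Subgroup.centralizer (G : Set (V ≃ₗ[K] V)) := by
      rw [hcent]; exact hmem ve (Or.inr hjve)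
    have hgu : Commute (j g) u := by
      rw [← hjue]
      have := (Subgroup.mem_centralizer_iff.mp huec) g hg
      have h2 : (j g) * (j ue) = (j ue) * (j g) := congrArg LinearEquiv.toLinearMap this
      exact h2
    have hgv : Commute (j g) v := by
      rw [← hjve]
      have := (Subgroup.mem_centralizer_iff.mp hvec) g hg
      have h2 : (j g) * (j ve) = (j ve) * (j g) := congrArg LinearEquiv.toLinearMap this
      exact h2
    rw [← huv]
    exact hgu.add_right hgv
  constructor
  · -- semisimplicity for `H`
    intro W hW
    have hWG' : ∀ g ∈ G', ∀ v ∈ W, g v ∈ W := fun g hg v hv => hW g (hG'H hg) v hv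
    have hWA' : ∀ a ∈ A', ∀ v ∈ W, a v ∈ W := hinv W hWG'
    have hWG : ∀ g ∈ G, ∀ v ∈ W, g v ∈ W := fun g hg v hv => hWA' (j g) (hGA' g hg) v hv
    obtain ⟨W', hWc, hW'⟩ := hGss W hWG
    exact ⟨W', hWc, fun g hg v hv => hW' g (hHG hg) v hv⟩
  · -- centralizers
    apply le_antisymm
    · calc Subgroup.centralizer (H : Set (V ≃ₗ[K] V))
          ≤ Subgroup.centralizer (G' : Set (V ≃ₗ[K] V)) :=
            Subgroup.centralizer_le (SetLike.coe_subset_coe.mpr hG'H)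
        _ = Subgroup.centralizer (G : Set (V ≃ₗ[K] V)) := hcent.symm
    · exact Subgroup.centralizer_le (SetLike.coe_subset_coe.mpr hHG)
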